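/- Let Y be a nonnegative random variable with 0 < E[Y] < ∞, let Ẏ be its Y-size-biased transform, and let U be uniform on [0,1] independent of Ẏ. If U·Ẏ has the same distribution as Y, then Y is exponentially distributed. -/

import Mathlib

open MeasureTheory ProbabilityTheory

open Set intervalIntegral in
private theorem aux_ode (a : ℝ) (ha : 0 < a) (G : ℝ → ℝ) (hGm : Measurable G)
    (hG0 : ∀ t, 0 ≤ G t) (hG1 : ∀ t, G t ≤ 1)
    (hneg : ∀ t < (0:ℝ), G t = 1)
    (hint : IntegrableOn G (Ioi 0) volume)
    (heq : ∀ t, 0 ≤ t → G t = (∫ s in Ioi t, G s) / a)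
    (htot : (∫ s in Ioi (0:ℝ), G s) = a) :
    ∀ t, 0 ≤ t → G t = Real.exp (-(t / a)) := by
  have hII : ∀ u v : ℝ, IntervalIntegrable G volume u v := by
    intro u v
    rw [intervalIntegrable_iff]
    haveI : IsFiniteMeasure (volume.restrict (uIoc u v)) := by
      constructor
      rw [Measure.restrict_apply_univ]
      exact measure_Ioc_lt_top
    refine Integrable.mono' (integrable_const 1) hGm.aestronglyMeasurable.restrict
      (Filter.Eventually.of_forall fun s => ?_)
    rw [Real.norm_eq_abs, abs_of_nonneg (hG0 s)]; exact hG1 s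
  set F : ℝ → ℝ := fun t => ∫ s in (0:ℝ)..t, G s with hF
  have hFcont : Continuous F := continuous_primitive hII 0
  have hsplit : ∀ t, 0 ≤ t → (∫ s in Ioi t, G s) = a - F t := by
    intro t ht
    have hdisj : Disjoint (Ioc 0 t) (Ioi t) := Ioc_disjoint_Ioi le_rfl
    have hunion : Ioc 0 t ∪ Ioi t = Ioi 0 := Ioc_union_Ioi_eq_Ioi ht
    have h1 : IntegrableOn G (Ioc 0 t) volume := hint.mono_set Ioc_subset_Ioi_self
    have h2 : IntegrableOn G (Ioi t) volume := hint.mono_set (Ioi_subset_Ioi ht)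
    have := setIntegral_union hdisj measurableSet_Ioi h1 h2
    rw [hunion, htot] at this
    have hFt : F t = ∫ s in Ioc 0 t, G s := intervalIntegral.integral_of_le ht
    rw [hFt]; linarith
  have hGF : ∀ t, 0 ≤ t → G t = 1 - F t / a := by
    intro t ht
    rw [heq t ht, hsplit t ht]; field_simp
  have hGeq : G = fun s => 1 - F (max s 0) / a := by
    funext s
    rcases le_or_gt 0 s with h | h
    · rw [max_eq_left h]; exact hGF s h
    · rw [max_eq_right h.le, hneg s h]
      simp [hF, intervalIntegral.integral_same]
  have hGcont : Continuous G := by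
    rw [hGeq]
    exact continuous_const.sub ((hFcont.comp (continuous_id.max continuous_const)).div_const a)
  have hFderiv : ∀ t, HasDerivAt F (G t) t := fun t =>
    intervalIntegral.integral_hasDerivAt_right (hII 0 t)
      hGm.aestronglyMeasurable.stronglyMeasurableAtFilter hGcont.continuousAt
  set f : ℝ → ℝ := fun t => (1 - F t / a) * Real.exp (t / a) with hf
  have hfd : ∀ x, 0 ≤ x → HasDerivAt f 0 x := by
    intro x hx
    have h1 : HasDerivAt (fun t => 1 - F t / a) (-(G x / a)) x :=
      ((hFderiv x).div_const a).const_sub 1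
    have h2 : HasDerivAt (fun t => Real.exp (t / a)) (Real.exp (x / a) * (1 / a)) x := by
      have := ((hasDerivAt_id x).div_const a).exp
      simpa using this
    have := h1.mul h2
    refine this.congr_deriv ?_
    rw [← hGF x hx]
    ring
  have key : ∀ t, 0 ≤ t → f t = 1 := by
    intro t ht
    rcases eq_or_lt_of_le ht with rfl | ht'
    · simp [hf, hF, intervalIntegral.integral_same]
    · have := eq_of_has_deriv_right_eq (a := 0) (b := t) (f' := fun _ => (0:ℝ))
        (f := f) (g := fun _ => (1:ℝ))
        (fun x hx => (hfd x hx.1).hasDerivWithinAt)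
        (fun x _ => (hasDerivAt_const x 1).hasDerivWithinAt)
        ((continuous_const.sub (hFcont.div_const a)).mul
          (Real.continuous_exp.comp (continuous_id.div_const a))).continuousOn
        continuousOn_const (by simp [hf, hF, intervalIntegral.integral_same])
      exact this t ⟨ht, le_rfl⟩
  intro t ht
  have h1 := key t ht
  have h2 : (1 - F t / a) = Real.exp (-(t/a)) := by
    rw [Real.exp_neg]
    exact eq_inv_of_mul_eq_one_left h1
  rw [hGF t ht, h2]

open Set in
private theorem aux_pointwise (t y : ℝ) (ht : 0 ≤ t) :
    ENNReal.ofReal y * (volume.restrict (Icc (0:ℝ) 1)) {u : ℝ | t < u * y}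
      = ENNReal.ofReal (y - t) := by
  have hms : MeasurableSet {u : ℝ | t < u * y} :=
    measurableSet_lt measurable_const (measurable_id.mul_const y)
  rw [Measure.restrict_apply hms]
  rcases le_or_gt y 0 with hy | hy
  · rw [ENNReal.ofReal_of_nonpos hy, ENNReal.ofReal_of_nonpos (by linarith), zero_mul]
  · have hset : {u : ℝ | t < u * y} ∩ Icc (0:ℝ) 1 = Ioc (t / y) 1 := by
      ext u
      simp only [mem_inter_iff, mem_setOf_eq, mem_Icc, mem_Ioc]
      constructor
      · rintro ⟨h1, h2, h3⟩
        exact ⟨(div_lt_iff₀ hy).mpr (by linarith [mul_comm u y]), h3⟩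
      · rintro ⟨h1, h2⟩
        have := (div_lt_iff₀ hy).mp h1
        refine ⟨by linarith [mul_comm u y], ?_, h2⟩
        nlinarith [div_nonneg ht hy.le]
    rw [hset, Real.volume_Ioc, ← ENNReal.ofReal_mul hy.le]
    congr 1
    field_simp

open Set in
private theorem aux_layercake (μ : Measure ℝ) [IsProbabilityMeasure μ] (t : ℝ) :
    ∫⁻ y, ENNReal.ofReal (y - t) ∂μ = ∫⁻ s in Ioi (0:ℝ), μ (Ioi (t + s)) := by
  have h1 : ∀ y : ℝ, ENNReal.ofReal (y - t) = ENNReal.ofReal (max (y - t) 0) := by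
    intro y
    rcases le_total (y - t) 0 with h | h
    · rw [max_eq_right h, ENNReal.ofReal_of_nonpos h, ENNReal.ofReal_zero]
    · rw [max_eq_left h]
  have hm : Measurable fun y : ℝ => max (y - t) 0 :=
    (measurable_id.sub_const t).max measurable_const
  rw [lintegral_congr h1,
    lintegral_eq_lintegral_meas_lt (f := fun y => max (y - t) 0) μ
      (Filter.Eventually.of_forall fun y => le_max_right _ _) hm.aemeasurable]
  refine setLIntegral_congr_fun measurableSet_Ioi (fun s hs => ?_)
  congr 1
  ext y
  simp only [mem_setOf_eq, lt_max_iff, mem_Ioi]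
  constructor
  · rintro (h | h)
    · linarith
    · exact absurd h (not_lt.mpr (le_of_lt hs))
  · intro h; left; linarith [mem_Ioi.mp hs]

/-- The law of the `Y`-size-biased transform of a random variable with law `μ`
and mean `a`: `dν(y) = y dμ(y) / a`. -/
noncomputable def sizeBiasedLaw (μ : Measure ℝ) (a : ℝ) : Measure ℝ :=
  (ENNReal.ofReal a)⁻¹ • μ.withDensity (fun y => ENNReal.ofReal y)

open Set in
theorem stmt_16 {Ω : Type*} [MeasureSpace Ω] (P : Measure Ω) [IsProbabilityMeasure P]
    (Y Ydot U : Ω → ℝ) (hY : Measurable Y) (hYdot : Measurable Ydot) (hU : Measurable U)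
    (hY_nonneg : ∀ ω, 0 ≤ Y ω) (hY_int : Integrable Y P) (hY_pos : 0 < ∫ ω, Y ω ∂P)
    (hYdot_law : P.map Ydot = sizeBiasedLaw (P.map Y) (∫ ω, Y ω ∂P))
    (hU_law : P.map U = volume.restrict (Set.Icc (0:ℝ) 1))
    (h_indep : IndepFun U Ydot P)
    (h_eq : P.map (fun ω => U ω * Ydot ω) = P.map Y) :
    ∃ r : ℝ, 0 < r ∧ P.map Y = expMeasure r := by
  set μ := P.map Y with hμ
  set a := ∫ ω, Y ω ∂P with ha
  have haa : 0 < a := hY_pos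
  haveI hμP : IsProbabilityMeasure μ := Measure.isProbabilityMeasure_map hY.aemeasurable
  -- Y is a.s. nonnegative under its law
  have hIio : μ (Iio 0) = 0 := by
    rw [hμ, Measure.map_apply hY measurableSet_Iio]
    have : Y ⁻¹' Iio 0 = ∅ := by
      ext ω; simp only [mem_preimage, mem_Iio, mem_empty_iff_false, iff_false, not_lt]
      exact hY_nonneg ω
    rw [this, measure_empty]
  have hIci : μ (Ici 0) = 1 := by
    have := prob_compl_eq_one_sub (μ := μ) (s := Iio 0) measurableSet_Iio
    rw [compl_Iio, hIio] at this
    simpa using this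
  -- the mean as a Lebesgue integral
  have hmean : ∫⁻ y, ENNReal.ofReal y ∂μ = ENNReal.ofReal a := by
    rw [hμ, lintegral_map ENNReal.measurable_ofReal hY,
      ← ofReal_integral_eq_lintegral_ofReal hY_int (Filter.Eventually.of_forall hY_nonneg)]
  -- total tail integral
  have htot_lint : ∫⁻ s in Ioi (0:ℝ), μ (Ioi s) = ENNReal.ofReal a := by
    rw [← hmean]
    have hnn : 0 ≤ᵐ[μ] (fun y : ℝ => y) := by
      rw [Filter.EventuallyLE, ae_iff]
      simpa using (show μ {a : ℝ | a < 0} = 0 from hIio)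
    rw [lintegral_eq_lintegral_meas_lt (f := fun y => y) μ hnn measurable_id.aemeasurable]
    rfl
  -- key identity E1
  have hE1 : ∀ t : ℝ, 0 ≤ t →
      μ (Ioi t) = (ENNReal.ofReal a)⁻¹ * ∫⁻ s in Ioi (0:ℝ), μ (Ioi (t + s)) := by
    intro t ht
    rw [← aux_layercake μ t]
    have hmap2 : P.map (fun ω => (U ω, Ydot ω)) = (P.map U).prod (P.map Ydot) :=
      (indepFun_iff_map_prod_eq_prod_map_map hU.aemeasurable hYdot.aemeasurable).mp h_indep
    have hprod : μ = ((volume.restrict (Icc (0:ℝ) 1)).prod (P.map Ydot)).map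
        (fun p : ℝ × ℝ => p.1 * p.2) := by
      rw [← h_eq, ← hU_law, ← hmap2,
        Measure.map_map (g := fun p : ℝ × ℝ => p.1 * p.2) (measurable_fst.mul measurable_snd) (hU.prodMk hYdot)]
      rfl
    haveI : IsProbabilityMeasure (P.map Ydot) := Measure.isProbabilityMeasure_map hYdot.aemeasurable
    have hms : MeasurableSet ((fun p : ℝ × ℝ => p.1 * p.2) ⁻¹' Ioi t) :=
      (measurable_fst.mul measurable_snd) measurableSet_Ioi
    rw [hprod, Measure.map_apply (f := fun p : ℝ × ℝ => p.1 * p.2) (measurable_fst.mul measurable_snd) measurableSet_Ioi,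
      Measure.prod_apply_symm hms]
    calc ∫⁻ y, (volume.restrict (Icc (0:ℝ) 1)) {u : ℝ | (u, y) ∈
            (fun p : ℝ × ℝ => p.1 * p.2) ⁻¹' Ioi t} ∂(P.map Ydot)
        = (ENNReal.ofReal a)⁻¹ * ∫⁻ y, ENNReal.ofReal y *
            (volume.restrict (Icc (0:ℝ) 1)) {u : ℝ | t < u * y} ∂μ := by
          rw [hYdot_law, sizeBiasedLaw, lintegral_smul_measure,
            lintegral_withDensity_eq_lintegral_mul_non_measurable _ ENNReal.measurable_ofReal
              (Filter.Eventually.of_forall fun y => ENNReal.ofReal_lt_top)]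
          rfl
      _ = (ENNReal.ofReal a)⁻¹ * ∫⁻ y, ENNReal.ofReal (y - t) ∂μ := by
          congr 1
          exact lintegral_congr fun y => aux_pointwise t y ht
      _ = (ENNReal.ofReal a)⁻¹ * ∫⁻ y, ENNReal.ofReal (y - t)
            ∂(((volume.restrict (Icc (0:ℝ) 1)).prod (P.map Ydot)).map
              (fun p : ℝ × ℝ => p.1 * p.2)) := by rw [← hprod]
  -- pass to real-valued tail function
  set G : ℝ → ℝ := fun t => (μ (Ioi t)).toReal with hG
  have hof : ∀ t, ENNReal.ofReal (G t) = μ (Ioi t) := fun t =>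
    ENNReal.ofReal_toReal (measure_ne_top μ _)
  have hG0 : ∀ t, 0 ≤ G t := fun t => ENNReal.toReal_nonneg
  have hG1 : ∀ t, G t ≤ 1 := by
    intro t
    have h := prob_le_one (μ := μ) (s := Ioi t)
    calc G t ≤ (1 : ENNReal).toReal := ENNReal.toReal_mono (by norm_num) h
      _ = 1 := by simp
  have hGm : Measurable G := by
    have hanti : Antitone fun t : ℝ => μ (Ioi t) := fun u v huv =>
      measure_mono (Ioi_subset_Ioi huv)
    exact ENNReal.measurable_toReal.comp hanti.measurable
  have hneg : ∀ t < (0:ℝ), G t = 1 := by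
    intro t ht
    have h1 : μ (Ioi t) ≥ μ (Ici 0) := measure_mono fun y hy => lt_of_lt_of_le ht hy
    have h2 : μ (Ioi t) ≤ 1 := prob_le_one
    rw [hIci] at h1
    have : μ (Ioi t) = 1 := le_antisymm h2 h1
    show (μ (Ioi t)).toReal = 1
    rw [this]; simp
  have hint : IntegrableOn G (Ioi 0) volume := by
    refine ⟨hGm.aestronglyMeasurable.restrict, ?_⟩
    rw [hasFiniteIntegral_iff_ofReal (Filter.Eventually.of_forall fun s => hG0 s)]
    have : ∫⁻ s in Ioi (0:ℝ), ENNReal.ofReal (G s) = ENNReal.ofReal a := by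
      rw [← htot_lint]
      exact setLIntegral_congr_fun measurableSet_Ioi
        (fun s _ => hof s)
    rw [this]; exact ENNReal.ofReal_lt_top
  have hGtle : ∀ t, 0 ≤ t → ∫⁻ s in Ioi (0:ℝ), ENNReal.ofReal (G (t + s)) ≤ ENNReal.ofReal a := by
    intro t ht
    rw [← htot_lint]
    refine lintegral_mono fun s => ?_
    rw [hof]
    exact measure_mono (Ioi_subset_Ioi (by linarith))
  have hGtint : ∀ t, 0 ≤ t → IntegrableOn (fun s => G (t + s)) (Ioi 0) volume := by
    intro t ht
    refine ⟨(hGm.comp (measurable_const_add t)).aestronglyMeasurable.restrict, ?_⟩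
    rw [hasFiniteIntegral_iff_ofReal (Filter.Eventually.of_forall fun s => hG0 _)]
    exact lt_of_le_of_lt (hGtle t ht) ENNReal.ofReal_lt_top
  -- real form of E1
  have hE1R : ∀ t, 0 ≤ t → G t = (∫ s in Ioi (0:ℝ), G (t + s)) / a := by
    intro t ht
    have h := hE1 t ht
    have hrw : ∫⁻ s in Ioi (0:ℝ), μ (Ioi (t + s)) =
        ENNReal.ofReal (∫ s in Ioi (0:ℝ), G (t + s)) := by
      rw [ofReal_integral_eq_lintegral_ofReal (hGtint t ht)
        (Filter.Eventually.of_forall fun s => hG0 _)]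
      exact setLIntegral_congr_fun measurableSet_Ioi
        (fun s _ => (hof (t + s)).symm)
    rw [hrw, ← hof t] at h
    have hnn : 0 ≤ ∫ s in Ioi (0:ℝ), G (t + s) :=
      setIntegral_nonneg measurableSet_Ioi fun s _ => hG0 _
    have := congrArg ENNReal.toReal h
    rw [ENNReal.toReal_ofReal (hG0 t), ENNReal.toReal_mul, ENNReal.toReal_inv,
      ENNReal.toReal_ofReal haa.le, ENNReal.toReal_ofReal hnn] at this
    rw [this, div_eq_inv_mul]
  -- translation
  have htrans : ∀ t : ℝ, (∫ s in Ioi (0:ℝ), G (t + s)) = ∫ s in Ioi t, G s := by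
    intro t
    have h := (measurePreserving_add_right volume t).setIntegral_preimage_emb
      (measurableEmbedding_addRight t) G (Ioi t)
    have hpre : (fun x : ℝ => x + t) ⁻¹' Ioi t = Ioi 0 := by
      ext x; simp [lt_add_iff_pos_left]
    rw [hpre] at h
    rw [← h]
    refine setIntegral_congr_fun measurableSet_Ioi fun s _ => ?_
    rw [add_comm]
  have htotR : (∫ s in Ioi (0:ℝ), G s) = a := by
    have hnn : 0 ≤ ∫ s in Ioi (0:ℝ), G s :=
      setIntegral_nonneg measurableSet_Ioi fun s _ => hG0 _
    have h1 : ENNReal.ofReal (∫ s in Ioi (0:ℝ), G s) = ENNReal.ofReal a := by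
      rw [ofReal_integral_eq_lintegral_ofReal hint (Filter.Eventually.of_forall fun s => hG0 _),
        ← htot_lint]
      exact setLIntegral_congr_fun measurableSet_Ioi
        (fun s _ => hof s)
    have := congrArg ENNReal.toReal h1
    rwa [ENNReal.toReal_ofReal hnn, ENNReal.toReal_ofReal haa.le] at this
  have heq' : ∀ t, 0 ≤ t → G t = (∫ s in Ioi t, G s) / a := by
    intro t ht
    rw [hE1R t ht, htrans t]
  have hGexp := aux_ode a haa G hGm hG0 hG1 hneg hint heq' htotR
  -- conclude
  refine ⟨a⁻¹, inv_pos.mpr haa, ?_⟩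
  haveI hexp : IsProbabilityMeasure (expMeasure a⁻¹) :=
    isProbabilityMeasure_expMeasure (inv_pos.mpr haa)
  refine Measure.ext_of_Iic μ (expMeasure a⁻¹) fun x => ?_
  have hrhs : expMeasure a⁻¹ (Iic x)
      = ENNReal.ofReal (if 0 ≤ x then 1 - Real.exp (-(a⁻¹ * x)) else 0) := by
    rw [expMeasure, gammaMeasure, withDensity_apply _ measurableSet_Iic]
    have hpdf : gammaPDF 1 a⁻¹ = exponentialPDF a⁻¹ := rfl
    rw [hpdf, lintegral_exponentialPDF_eq_antiDeriv (inv_pos.mpr haa) x]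
  rw [hrhs]
  rcases lt_or_ge x 0 with hx | hx
  · rw [if_neg (not_le.mpr hx), ENNReal.ofReal_zero]
    exact measure_mono_null (fun y (hy : y ≤ x) => lt_of_le_of_lt hy hx) hIio
  · rw [if_pos hx]
    set e := Real.exp (-(a⁻¹ * x)) with he
    have hGx : G x = e := by
      rw [hGexp x hx, he]
      congr 1
      rw [div_eq_inv_mul]
    have hepos : 0 < e := Real.exp_pos _
    have hele : e ≤ 1 := Real.exp_le_one_iff.mpr (neg_nonpos.mpr (by positivity))
    have hIoi : μ (Ioi x) = ENNReal.ofReal e := by rw [← hof x, hGx]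
    have hsum : μ (Iic x) + μ (Ioi x) = 1 := by
      rw [← measure_union (Iic_disjoint_Ioi le_rfl) measurableSet_Ioi, Iic_union_Ioi,
        measure_univ]
    have hsum2 : ENNReal.ofReal (1 - e) + ENNReal.ofReal e = 1 := by
      rw [← ENNReal.ofReal_add (by linarith) hepos.le]
      norm_num
    rw [hIoi] at hsum
    rw [← hsum2] at hsum
    exact (ENNReal.add_left_inj ENNReal.ofReal_ne_top).mp hsum
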